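/- Abstract main inequality via a near-additive decomposition: suppose ζ : V → ℝ on a real vector space V satisfies ζ(cF) = c·ζ(F) for c > 0, and suppose there exist m ∈ ℕ and constants C, k ≥ 0 such that for all F, G ∈ V: |ζ(F+G) − ζ(F) − ζ(G)| ≤ 2mC + k·Q(F,G), where Q(c F, c G) = c^N Q(F,G) for c > 0 and fixed N ≥ 2. Then |ζ(F+G) − ζ(F) − ζ(G)| ≤ C_N · Q(F,G)^{1/N} with C_N = N(N−1)^{(1−N)/N}(2mC)^{(N−1)/N} k^{1/N}, for all F, G with Q(F,G) > 0. -/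

import Mathlib

open Real

lemma key_id (r A B : ℝ) (hr : 2 ≤ r) (hA : 0 < A) (hB : 0 < B) :
    A / (A / ((r-1)*B)) ^ (1/r) + B * ((A / ((r-1)*B)) ^ (1/r)) ^ (r-1)
      = r * (r-1) ^ ((1-r)/r) * A ^ ((r-1)/r) * B ^ (1/r) := by
  have hr1 : 0 < r - 1 := by linarith
  have hr0 : 0 < r := by linarith
  have hrne : r ≠ 0 := hr0.ne'
  have hX : 0 < A / ((r-1)*B) := div_pos hA (mul_pos hr1 hB)
  have hsplit : ∀ s : ℝ, (A / ((r-1)*B)) ^ s = A ^ s / ((r-1) ^ s * B ^ s) := by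
    intro s
    rw [Real.div_rpow hA.le (mul_pos hr1 hB).le, Real.mul_rpow hr1.le hB.le]
  have h1 : ((A / ((r-1)*B)) ^ (1/r)) ^ (r-1) = (A / ((r-1)*B)) ^ ((r-1)/r) := by
    rw [← Real.rpow_mul hX.le]; ring_nf
  rw [h1, hsplit, hsplit]
  have hA1 : A / (A ^ (1/r) / ((r-1) ^ (1/r) * B ^ (1/r)))
      = A ^ ((r-1)/r) * ((r-1) ^ (1/r) * B ^ (1/r)) := by
    rw [div_div_eq_mul_div, div_eq_iff (by positivity)]
    have hAA : A ^ ((r-1)/r) * A ^ (1/r) = A := by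
      rw [← Real.rpow_add hA, show (r-1)/r + 1/r = 1 by field_simp; ring, Real.rpow_one]
    linear_combination ((r-1) ^ (1/r) * B ^ (1/r)) * hAA.symm
  rw [hA1]
  have hB1 : B * (A ^ ((r-1)/r) / ((r-1) ^ ((r-1)/r) * B ^ ((r-1)/r)))
      = A ^ ((r-1)/r) * ((r-1) ^ ((1-r)/r) * B ^ (1/r)) := by
    rw [div_eq_mul_inv, mul_inv, ← Real.rpow_neg hr1.le, ← Real.rpow_neg hB.le]
    rw [show -((r-1)/r) = (1-r)/r by ring]
    have : B * B ^ ((1-r)/r) = B ^ (1/r) := by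
      nth_rewrite 1 [← Real.rpow_one B]
      rw [← Real.rpow_add hB]; congr 1; field_simp; ring
    calc B * (A ^ ((r-1)/r) * ((r-1) ^ ((1-r)/r) * B ^ ((1-r)/r)))
        = A ^ ((r-1)/r) * ((r-1) ^ ((1-r)/r) * (B * B ^ ((1-r)/r))) := by ring
      _ = _ := by rw [this]
  rw [hB1]
  have hpow : (r-1) ^ (1/r) = (r-1) * (r-1) ^ ((1-r)/r) := by
    nth_rewrite 2 [← Real.rpow_one (r-1)]
    rw [← Real.rpow_add hr1]; congr 1; field_simp; ring
  rw [hpow]; ring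

lemma aux_opt (N : ℕ) (hN : 2 ≤ N) (A B P : ℝ) (hA : 0 ≤ A) (hB : 0 ≤ B)
    (h : ∀ E : ℝ, 0 < E → P ≤ A / E + B * E ^ ((N:ℝ)-1)) :
    P ≤ N * ((N:ℝ)-1) ^ ((1-(N:ℝ))/N) * A ^ (((N:ℝ)-1)/N) * B ^ (1/(N:ℝ)) := by
  set r := (N:ℝ) with hrdef
  have hr : 2 ≤ r := by rw [hrdef]; exact_mod_cast hN
  have hr1 : 0 < r - 1 := by linarith
  have hr0 : 0 < r := by linarith
  have hrhs0 : (0:ℝ) ≤ r * (r-1) ^ ((1-r)/r) * A ^ ((r-1)/r) * B ^ (1/r) := by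
    have := Real.rpow_nonneg hA ((r-1)/r)
    have := Real.rpow_nonneg hB (1/r)
    have := Real.rpow_nonneg hr1.le ((1-r)/r)
    positivity
  rcases eq_or_lt_of_le hA with hA0 | hApos
  · -- A = 0 : show P ≤ 0 ≤ RHS
    have hP0 : P ≤ 0 := by
      refine le_of_forall_pos_le_add ?_
      intro t ht
      rcases eq_or_lt_of_le hB with hB0 | hBpos
      · have h2 := h 1 one_pos
        simp [← hA0, ← hB0] at h2
        linarith
      · have hE : (0:ℝ) < (t/B) ^ (1/(r-1)) := Real.rpow_pos_of_pos (div_pos ht hBpos) _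
        have hpow : ((t/B) ^ (1/(r-1))) ^ (r-1) = t / B := by
          rw [← Real.rpow_mul (div_pos ht hBpos).le, one_div_mul_cancel hr1.ne',
            Real.rpow_one]
        have h2 := h _ hE
        rw [hpow, ← hA0] at h2
        have h3 : B * (t/B) = t := by field_simp
        rw [h3] at h2
        simpa using h2
    linarith
  rcases eq_or_lt_of_le hB with hB0 | hBpos
  · -- B = 0
    have hP0 : P ≤ 0 := by
      refine le_of_forall_pos_le_add ?_
      intro t ht
      have hE : (0:ℝ) < A / t := div_pos hApos ht
      have h2 := h _ hE
      rw [← hB0] at h2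
      have h3 : A / (A / t) = t := by
        field_simp
      rw [h3] at h2
      simpa using h2
    linarith
  · -- main case
    have hE : (0:ℝ) < (A / ((r-1)*B)) ^ (1/r) :=
      Real.rpow_pos_of_pos (div_pos hApos (mul_pos hr1 hBpos)) _
    have h2 := h _ hE
    rwa [key_id r A B hr hApos hBpos] at h2



/-- Abstract main inequality: if ζ is positively 1-homogeneous, Q is positively
N-homogeneous, and |ζ(F+G) - ζ(F) - ζ(G)| ≤ 2mC + k Q(F,G), then
|ζ(F+G) - ζ(F) - ζ(G)| ≤ C_N Q(F,G)^{1/N} with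
C_N = N (N-1)^{(1-N)/N} (2mC)^{(N-1)/N} k^{1/N}. -/
theorem stmt16 {V : Type*} [AddCommGroup V] [Module ℝ V]
    (N : ℕ) (hN : 2 ≤ N) (m : ℕ) (C k : ℝ) (hC : 0 ≤ C) (hk : 0 ≤ k)
    (ζ : V → ℝ) (Q : V × V → ℝ)
    (hζhom : ∀ c : ℝ, 0 < c → ∀ F : V, ζ (c • F) = c * ζ F)
    (hQ0 : ∀ p : V × V, 0 ≤ Q p)
    (hQhom : ∀ c : ℝ, 0 < c → ∀ F G : V, Q (c • F, c • G) = c ^ N * Q (F, G))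
    (hbound : ∀ F G : V, |ζ (F + G) - ζ F - ζ G| ≤ 2 * m * C + k * Q (F, G)) :
    ∀ F G : V, 0 < Q (F, G) →
      |ζ (F + G) - ζ F - ζ G|
        ≤ (N : ℝ) * ((N : ℝ) - 1) ^ ((1 - (N : ℝ)) / (N : ℝ))
          * (2 * m * C) ^ (((N : ℝ) - 1) / (N : ℝ)) * k ^ (1 / (N : ℝ))
          * Q (F, G) ^ (1 / (N : ℝ)) := by
  intro F G hQpos
  have hkey : ∀ E : ℝ, 0 < E →
      |ζ (F + G) - ζ F - ζ G| ≤ (2 * m * C) / E + (k * Q (F, G)) * E ^ ((N:ℝ)-1) := by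
    intro E hE
    have hb := hbound (E • F) (E • G)
    rw [← smul_add, hζhom E hE, hζhom E hE, hζhom E hE, hQhom E hE] at hb
    have heq : E * ζ (F + G) - E * ζ F - E * ζ G = E * (ζ (F + G) - ζ F - ζ G) := by ring
    rw [heq, abs_mul, abs_of_pos hE] at hb
    have h2 : |ζ (F + G) - ζ F - ζ G| ≤ (2 * m * C + k * (E ^ N * Q (F, G))) / E :=
      (le_div_iff₀ hE).mpr (by linarith)
    have h3 : (2 * m * C + k * (E ^ N * Q (F, G))) / E
        = (2 * m * C) / E + (k * Q (F, G)) * E ^ ((N:ℝ)-1) := by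
      rw [show (N:ℝ) - 1 = ((N-1:ℕ):ℝ) by
          push_cast [Nat.cast_sub (by omega : 1 ≤ N)]; ring,
        Real.rpow_natCast,
        show E ^ N = E ^ (N-1) * E by rw [← pow_succ, Nat.sub_add_cancel (by omega)]]
      field_simp
    rwa [h3] at h2
  have := aux_opt N hN (2 * m * C) (k * Q (F, G)) _
    (by positivity) (by positivity) hkey
  rwa [Real.mul_rpow hk (hQ0 (F, G)), ← mul_assoc] at this
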